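/- arXiv:1906.06098 — 8 statements merged into one kernel-verified Lean document; each statement's English description precedes it below -/
import Mathlib

section
/- Let x ∈ ℤ^N (cyclic indexing) and let x' be obtained from x by replacing coordinate x_i with a = ⌊(x_{i-1}+x_{i+1})/2⌋. Then f(x') ≤ f(x), where f(y) = ∑_{j=1}^N (y_j - y_{j+1})^2 cyclically. -/
lemma key_quad (p q t a : ℤ) (ha : a = Int.fdiv (p + q) 2) :
    (p - a) ^ 2 + (a - q) ^ 2 ≤ (p - t) ^ 2 + (t - q) ^ 2 := by
  rw [Int.fdiv_eq_ediv_of_nonneg _ (by norm_num)] at ha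
  have hs := Int.mul_ediv_add_emod (p + q) 2
  rcases Int.emod_two_eq (p + q) with h | h
  · have hq : q = 2 * a - p := by omega
    subst hq
    nlinarith [sq_nonneg (t - a)]
  · have hq : q = 2 * a + 1 - p := by omega
    subst hq
    have hprod : 0 ≤ (t - a) * (t - a - 1) := by
      rcases le_or_gt t a with h' | h'
      · have h1 : t - a ≤ 0 := by omega
        have h2 : t - a - 1 ≤ 0 := by omega
        nlinarith [mul_nonneg (neg_nonneg.mpr h1) (neg_nonneg.mpr h2)]
      · exact mul_nonneg (by omega) (by omega)
    nlinarith [hprod]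

theorem stmt_1 (N : ℕ) [NeZero N] (hN : 3 ≤ N) (x : Fin N → ℤ) (i : Fin N)
    (a : ℤ) (ha : a = Int.fdiv (x (i - 1) + x (i + 1)) 2)
    (x' : Fin N → ℤ) (hx' : x' = Function.update x i a) :
    ∑ j : Fin N, (x' j - x' (j + 1)) ^ 2 ≤ ∑ j : Fin N, (x j - x (j + 1)) ^ 2 := by
  have h10 : (1 : Fin N) ≠ 0 := by
    have h1 : (1 : Fin N).val = 1 := by
      simp [Fin.val_one, Nat.mod_eq_of_lt (by omega : 1 < N)]
    intro h
    rw [h] at h1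
    simp at h1
  have him : i - 1 ≠ i := fun h => h10 (sub_eq_self.mp h)
  have hip : i + 1 ≠ i := fun h => h10 (add_eq_left.mp h)
  set s : Finset (Fin N) := {i - 1, i} with hsdef
  have hsub : s ⊆ Finset.univ := Finset.subset_univ _
  have hsplit : ∀ (F : Fin N → ℤ),
      ∑ j : Fin N, F j = ∑ j ∈ Finset.univ \ s, F j + ∑ j ∈ s, F j :=
    fun F => (Finset.sum_sdiff hsub).symm
  rw [hsplit (fun j => (x' j - x' (j + 1)) ^ 2), hsplit (fun j => (x j - x (j + 1)) ^ 2)]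
  have hrest : ∑ j ∈ Finset.univ \ s, (x' j - x' (j + 1)) ^ 2
      = ∑ j ∈ Finset.univ \ s, (x j - x (j + 1)) ^ 2 := by
    apply Finset.sum_congr rfl
    intro j hj
    simp only [Finset.mem_sdiff, hsdef, Finset.mem_insert, Finset.mem_singleton] at hj
    push_neg at hj
    obtain ⟨-, hj1, hj2⟩ := hj
    have hj3 : j + 1 ≠ i := fun h => hj1 (by rw [← h]; exact (add_sub_cancel_right j 1).symm)
    rw [hx', Function.update_of_ne hj2, Function.update_of_ne hj3]
  rw [hrest]
  have hpair : ∀ (F : Fin N → ℤ), ∑ j ∈ s, F j = F (i - 1) + F i :=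
    fun F => Finset.sum_pair him
  rw [hpair (fun j => (x' j - x' (j + 1)) ^ 2), hpair (fun j => (x j - x (j + 1)) ^ 2)]
  have hii : i - 1 + 1 = i := by exact sub_add_cancel i 1
  have e1 : x' (i - 1) = x (i - 1) := by rw [hx', Function.update_of_ne him]
  have e2 : x' (i - 1 + 1) = a := by rw [hii, hx', Function.update_self]
  have e3 : x' i = a := by rw [hx', Function.update_self]
  have e4 : x' (i + 1) = x (i + 1) := by rw [hx', Function.update_of_ne hip]
  rw [e1, e2, e3, e4, hii]
  exact add_le_add_right (key_quad (x (i - 1)) (x (i + 1)) (x i) a ha) _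
end

section
/- Let x ∈ ℤ^N (cyclic indexing), suppose |x_i - (x_{i-1}+x_{i+1})/2| ≥ 1, and let x' be obtained from x by replacing x_i with a = ⌊(x_{i-1}+x_{i+1})/2⌋. Then f(x') ≤ f(x) - 1, where f(y) = ∑_{j=1}^N (y_j - y_{j+1})^2 cyclically. -/
theorem stmt_2 (N : ℕ) [NeZero N] (hN : 3 ≤ N) (x : Fin N → ℤ) (i : Fin N)
    (hd : |(x i : ℝ) - ((x (i - 1) : ℝ) + (x (i + 1) : ℝ)) / 2| ≥ 1)
    (a : ℤ) (ha : a = Int.fdiv (x (i - 1) + x (i + 1)) 2)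
    (x' : Fin N → ℤ) (hx' : x' = Function.update x i a) :
    ∑ j : Fin N, (x' j - x' (j + 1)) ^ 2 ≤ (∑ j : Fin N, (x j - x (j + 1)) ^ 2) - 1 := by
  set p := x (i - 1) with hp
  set q := x (i + 1) with hq
  set m := x i with hm
  -- Fin facts
  have h10 : (1 : Fin N) ≠ 0 := by
    rw [Ne, Fin.one_eq_zero_iff]; omega
  have him : i - 1 ≠ i := fun h => h10 (sub_eq_self.mp h)
  have hip : i + 1 ≠ i := fun h => h10 (add_eq_left.mp h)
  -- integer inequality from hd
  have hd2 : 2 * m - (p + q) ≥ 2 ∨ 2 * m - (p + q) ≤ -2 := by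
    rcases abs_cases ((m : ℝ) - ((p : ℝ) + (q : ℝ)) / 2) with ⟨he, _⟩ | ⟨he, _⟩
    · left
      have : (m : ℝ) - ((p : ℝ) + (q : ℝ)) / 2 ≥ 1 := by rw [← he]; exact hd
      have : ((2 * m - (p + q) : ℤ) : ℝ) ≥ 2 := by push_cast; linarith
      exact_mod_cast this
    · right
      have : (m : ℝ) - ((p : ℝ) + (q : ℝ)) / 2 ≤ -1 := by nlinarith [hd, he]
      have : ((2 * m - (p + q) : ℤ) : ℝ) ≤ -2 := by push_cast; linarith
      exact_mod_cast this
  have hafd : a = (p + q) / 2 := by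
    rw [ha, Int.fdiv_eq_ediv_of_nonneg _ (by norm_num)]
  have hcase : p + q = 2 * a ∨ p + q = 2 * a + 1 := by omega
  have key : (p - a) ^ 2 + (a - q) ^ 2 ≤ (p - m) ^ 2 + (m - q) ^ 2 - 1 := by
    rcases hcase with h | h
    · rcases hd2 with h2 | h2 <;> nlinarith [sq_nonneg (m - a), sq_nonneg (m - a - 1), sq_nonneg (m - a + 1)]
    · rcases hd2 with h2 | h2 <;> nlinarith [sq_nonneg (m - a), sq_nonneg (m - a - 1), sq_nonneg (m - a + 1)]
  -- sum splitting
  have hsub : ({i - 1, i} : Finset (Fin N)) ⊆ Finset.univ := Finset.subset_univ _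
  rw [← Finset.sum_sdiff hsub, ← Finset.sum_sdiff hsub]
  have hrest : ∑ j ∈ Finset.univ \ {i - 1, i}, (x' j - x' (j + 1)) ^ 2
      = ∑ j ∈ Finset.univ \ {i - 1, i}, (x j - x (j + 1)) ^ 2 := by
    apply Finset.sum_congr rfl
    intro j hj
    simp only [Finset.mem_sdiff, Finset.mem_insert, Finset.mem_singleton] at hj
    have hj1 : j ≠ i - 1 := fun h => hj.2 (Or.inl h)
    have hj2 : j ≠ i := fun h => hj.2 (Or.inr h)
    have hj3 : j + 1 ≠ i := by
      intro h
      apply hj1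
      rw [← h]; exact (add_sub_cancel_right j 1).symm
    rw [hx', Function.update_of_ne hj2, Function.update_of_ne hj3]
  have hpair' : ∑ j ∈ ({i - 1, i} : Finset (Fin N)), (x' j - x' (j + 1)) ^ 2
      = (p - a) ^ 2 + (a - q) ^ 2 := by
    rw [Finset.sum_pair him, hx']
    have e1 : i - 1 + 1 = i := by exact sub_add_cancel i 1
    rw [e1, Function.update_of_ne him, Function.update_self, Function.update_of_ne hip]
  have hpair : ∑ j ∈ ({i - 1, i} : Finset (Fin N)), (x j - x (j + 1)) ^ 2
      = (p - m) ^ 2 + (m - q) ^ 2 := by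
    rw [Finset.sum_pair him]
    have e1 : i - 1 + 1 = i := by exact sub_add_cancel i 1
    rw [e1]
  rw [hrest, hpair', hpair]
  omega
end

section
/- Let x ∈ ℝ^N with cyclic indexing, Δ_i = x_i - x_{i-1}, and d(x) = max_i |x_i - (x_{i-1}+x_{i+1})/2|. Then max_i |Δ_i| ≤ N·d(x). -/
theorem stmt_6 (N : ℕ) [NeZero N] (hN : 3 ≤ N) (x : Fin N → ℝ) :
    Finset.univ.sup' Finset.univ_nonempty (fun i : Fin N => |x i - x (i - 1)|) ≤
      N * Finset.univ.sup' Finset.univ_nonempty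
        (fun i : Fin N => |x i - (x (i - 1) + x (i + 1)) / 2|) := by
  set d := Finset.univ.sup' Finset.univ_nonempty
      (fun i : Fin N => |x i - (x (i - 1) + x (i + 1)) / 2|) with hd
  set D : Fin N → ℝ := fun i => x i - x (i - 1) with hD
  have hd_ge : ∀ i : Fin N, |x i - (x (i - 1) + x (i + 1)) / 2| ≤ d := by
    intro i
    exact Finset.le_sup' (fun i : Fin N => |x i - (x (i - 1) + x (i + 1)) / 2|) (Finset.mem_univ i)
  have hd0 : 0 ≤ d := le_trans (abs_nonneg _) (hd_ge 0)
  -- step bound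
  have step : ∀ i : Fin N, |D (i + 1) - D i| ≤ 2 * d := by
    intro i
    open Fin.CommRing Fin.NatCast in
    have h1 : (i + 1 : Fin N) - 1 = i := by ring
    have : D (i + 1) - D i = -(2 * (x i - (x (i - 1) + x (i + 1)) / 2)) := by
      simp only [hD, h1]; ring
    rw [this, abs_neg, abs_mul, abs_two]
    have := hd_ge i
    nlinarith [abs_nonneg (x i - (x (i - 1) + x (i + 1)) / 2)]
  -- telescoping
  open Fin.CommRing Fin.NatCast in
  have tele : ∀ (k : ℕ) (i : Fin N), |D (i + (k : Fin N)) - D i| ≤ 2 * k * d := by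
    intro k
    induction k with
    | zero => intro i; simp
    | succ k ih =>
      intro i
      have hcast : ((k + 1 : ℕ) : Fin N) = (k : Fin N) + 1 := by push_cast; ring
      have h1 : i + ((k + 1 : ℕ) : Fin N) = (i + (k : Fin N)) + 1 := by
        rw [hcast]; ring
      have goalcast : (((k:ℕ)+1 : ℕ) : ℝ) = (k : ℝ) + 1 := by push_cast; ring
      rw [goalcast]
      calc |D (i + ((k+1 : ℕ) : Fin N)) - D i|
          ≤ |D ((i + (k : Fin N)) + 1) - D (i + (k : Fin N))|
            + |D (i + (k : Fin N)) - D i| := by rw [h1]; exact abs_sub_le _ _ _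
        _ ≤ 2 * d + 2 * k * d := add_le_add (step _) (ih i)
        _ ≤ 2 * ((k:ℝ) + 1) * d := le_of_eq (by ring)
  -- sum of D is zero
  have hsum : ∑ i : Fin N, D i = 0 := by
    have : ∑ i : Fin N, x (i - 1) = ∑ i : Fin N, x i :=
      Equiv.sum_comp (Equiv.subRight (1 : Fin N)) x
    simp only [hD, Finset.sum_sub_distrib, this, sub_self]
  -- main bound for each i
  apply Finset.sup'_le
  intro i _
  show |D i| ≤ N * d
  rcases lt_trichotomy (D i) 0 with hneg | hzero | hpos
  · -- exists j with D j ≥ 0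
    have hj : ∃ j : Fin N, 0 ≤ D j := by
      by_contra h
      push_neg at h
      have : ∑ j : Fin N, D j < 0 :=
        Finset.sum_neg (fun j _ => h j) Finset.univ_nonempty
      linarith [hsum ▸ this]
    obtain ⟨j, hj⟩ := hj
    have key : |D i| ≤ |D i - D j| := by
      rw [abs_of_neg hneg, abs_sub_comm]
      rw [abs_of_nonneg (by linarith)]
      linarith
    -- j = i + k
    set k : ℕ := (j - i).val with hk
    have hkN : k < N := (j - i).isLt
    open Fin.CommRing Fin.NatCast in
    have hik : i + (k : Fin N) = j := by
      rw [hk, Fin.cast_val_eq_self]; ring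
    rcases le_or_gt (2 * k) N with h2k | h2k
    · have := tele k i
      rw [hik] at this
      rw [abs_sub_comm (D i) (D j)] at key
      calc |D i| ≤ 2 * k * d := le_trans key this
        _ ≤ N * d := by
          apply mul_le_mul_of_nonneg_right _ hd0
          exact_mod_cast h2k
    open Fin.CommRing Fin.NatCast in
    · have hcast : ((N - k : ℕ) : Fin N) = -(k : Fin N) := by
        have h1 : ((N - k : ℕ) : Fin N) + (k : Fin N) = ((N : ℕ) : Fin N) := by
          rw [← Nat.cast_add, Nat.sub_add_cancel hkN.le]
        have h2 : ((N : ℕ) : Fin N) = 0 := by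
          exact_mod_cast CharP.cast_eq_zero (Fin N) N
        linear_combination h1 + h2
      open Fin.CommRing Fin.NatCast in
      have hji : j + ((N - k : ℕ) : Fin N) = i := by
        rw [hcast, ← hik]; ring
      have := tele (N - k) j
      rw [hji] at this
      calc |D i| ≤ |D i - D j| := key
        _ ≤ 2 * (N - k : ℕ) * d := this
        _ ≤ N * d := by
          apply mul_le_mul_of_nonneg_right _ hd0
          have : (N - k : ℕ) ≤ N - k := le_refl _
          have hNk : 2 * (N - k) ≤ N := by omega
          exact_mod_cast hNk
  · rw [hzero, abs_zero]
    positivity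
  · -- symmetric: exists j with D j ≤ 0
    have hj : ∃ j : Fin N, D j ≤ 0 := by
      by_contra h
      push_neg at h
      have : 0 < ∑ j : Fin N, D j :=
        Finset.sum_pos (fun j _ => h j) Finset.univ_nonempty
      linarith [hsum ▸ this]
    obtain ⟨j, hj⟩ := hj
    have key : |D i| ≤ |D i - D j| := by
      rw [abs_of_pos hpos, abs_of_nonneg (by linarith)]
      linarith
    set k : ℕ := (j - i).val with hk
    have hkN : k < N := (j - i).isLt
    open Fin.CommRing Fin.NatCast in
    have hik : i + (k : Fin N) = j := by
      rw [hk, Fin.cast_val_eq_self]; ring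
    rcases le_or_gt (2 * k) N with h2k | h2k
    · have := tele k i
      rw [hik] at this
      rw [abs_sub_comm (D i) (D j)] at key
      calc |D i| ≤ 2 * k * d := le_trans key this
        _ ≤ N * d := by
          apply mul_le_mul_of_nonneg_right _ hd0
          exact_mod_cast h2k
    open Fin.CommRing Fin.NatCast in
    · have hcast : ((N - k : ℕ) : Fin N) = -(k : Fin N) := by
        have h1 : ((N - k : ℕ) : Fin N) + (k : Fin N) = ((N : ℕ) : Fin N) := by
          rw [← Nat.cast_add, Nat.sub_add_cancel hkN.le]
        have h2 : ((N : ℕ) : Fin N) = 0 := by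
          exact_mod_cast CharP.cast_eq_zero (Fin N) N
        linear_combination h1 + h2
      open Fin.CommRing Fin.NatCast in
      have hji : j + ((N - k : ℕ) : Fin N) = i := by
        rw [hcast, ← hik]; ring
      have := tele (N - k) j
      rw [hji] at this
      calc |D i| ≤ |D i - D j| := key
        _ ≤ 2 * (N - k : ℕ) * d := this
        _ ≤ N * d := by
          apply mul_le_mul_of_nonneg_right _ hd0
          have hNk : 2 * (N - k) ≤ N := by omega
          exact_mod_cast hNk
end

section
/- Let x ∈ ℝ^N with cyclic indexing and h(x) = 2∑_i (x_i - x_{i+1})^2 + ∑_i (x_i - x_{i+2})^2, d(x) = max_i |x_i - (x_{i-1}+x_{i+1})/2|. Then h(x) ≤ 6N^3·d(x)^2. -/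
theorem stmt_9 (N : ℕ) [NeZero N] (hN : 3 ≤ N) (x : Fin N → ℝ) :
    2 * (∑ i : Fin N, (x i - x (i + 1)) ^ 2) + ∑ i : Fin N, (x i - x (i + 2)) ^ 2 ≤
      6 * N ^ 3 * (Finset.univ.sup' Finset.univ_nonempty
        (fun i : Fin N => |x i - (x (i - 1) + x (i + 1)) / 2|)) ^ 2 := by
  set d := Finset.univ.sup' Finset.univ_nonempty
      (fun i : Fin N => |x i - (x (i - 1) + x (i + 1)) / 2|) with hd
  have hdge : ∀ i : Fin N, |x i - (x (i - 1) + x (i + 1)) / 2| ≤ d := by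
    intro i
    rw [hd]
    exact Finset.le_sup' (fun i : Fin N => |x i - (x (i - 1) + x (i + 1)) / 2|)
      (Finset.mem_univ i)
  have hNpos : (0:ℝ) < N := by positivity
  have hd0 : (0:ℝ) ≤ d := le_trans (abs_nonneg _) (hdge 0)
  set Δ : Fin N → ℝ := fun i => x i - x (i - 1) with hΔ
  have hΔ1 : ∀ i : Fin N, Δ (i + 1) = x (i + 1) - x i := by
    intro i
    have h1 : (i + 1 : Fin N) - 1 = i := add_sub_cancel_right i 1
    simp [hΔ, h1]
  have hstep : ∀ i : Fin N, |Δ (i + 1) - Δ i| ≤ 2 * d := by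
    intro i
    have h1 : Δ (i + 1) - Δ i = (-2) * (x i - (x (i - 1) + x (i + 1)) / 2) := by
      rw [hΔ1 i]; simp only [hΔ]; ring
    rw [h1, abs_mul]
    have : |(-2:ℝ)| = 2 := by norm_num
    rw [this]
    nlinarith [hdge i]
  have hsum : ∑ i : Fin N, Δ i = 0 := by
    have h2 : ∑ i : Fin N, x (i - 1) = ∑ i : Fin N, x i :=
      Fintype.sum_equiv (Equiv.subRight (1 : Fin N)) _ _ (fun i => rfl)
    simp only [hΔ, Finset.sum_sub_distrib, h2, sub_self]
  open Fin.CommRing in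
  have htel : ∀ (i : Fin N) (k : ℕ), |Δ (i + (k : Fin N)) - Δ i| ≤ 2 * d * k := by
    intro i k
    induction k with
    | zero => simp
    | succ k ih =>
      have hcast : ((k + 1 : ℕ) : Fin N) = (k : Fin N) + 1 := by push_cast; ring
      have h3 : i + ((k + 1 : ℕ) : Fin N) = (i + (k : Fin N)) + 1 := by rw [hcast]; ring
      rw [h3]
      calc |Δ ((i + (k : Fin N)) + 1) - Δ i|
          ≤ |Δ ((i + (k : Fin N)) + 1) - Δ (i + (k : Fin N))| + |Δ (i + (k : Fin N)) - Δ i| :=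
            abs_sub_le _ _ _
        _ ≤ 2 * d + 2 * d * k := add_le_add (hstep _) ih
        _ = 2 * d * (k + 1 : ℕ) := by push_cast; ring
  have hΔbound : ∀ i : Fin N, |Δ i| ≤ N * d := by
    intro i
    have hNΔ : (N : ℝ) * Δ i = ∑ k : Fin N, (Δ i - Δ (i + k)) := by
      have h4 : ∑ k : Fin N, Δ (i + k) = ∑ k : Fin N, Δ k :=
        Fintype.sum_equiv (Equiv.addLeft i) _ _ (fun k => rfl)
      rw [Finset.sum_sub_distrib, h4, hsum, sub_zero, Finset.sum_const, Finset.card_univ,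
        Fintype.card_fin, nsmul_eq_mul]
    have hterm : ∀ k : Fin N, |Δ i - Δ (i + k)| ≤ 2 * d * (k : ℕ) := by
      intro k
      rw [abs_sub_comm]
      open Fin.CommRing in
      have : ((k : ℕ) : Fin N) = k := Fin.cast_val_eq_self k
      simpa [this] using htel i (k : ℕ)
    have h5 : |(N : ℝ) * Δ i| ≤ ∑ k : Fin N, 2 * d * (k : ℕ) := by
      rw [hNΔ]
      exact le_trans (Finset.abs_sum_le_sum_abs _ _) (Finset.sum_le_sum fun k _ => hterm k)
    have hgauss : (∑ k : Fin N, ((k : ℕ) : ℝ)) * 2 = (N : ℝ) * ((N - 1 : ℕ) : ℝ) := by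
      rw [Fin.sum_univ_eq_sum_range (fun k => ((k : ℕ) : ℝ))]
      have h := congrArg (Nat.cast : ℕ → ℝ) (Finset.sum_range_id_mul_two N)
      rw [Nat.cast_mul, Nat.cast_mul, Nat.cast_sum] at h
      exact_mod_cast h
    have h6 : ∑ k : Fin N, 2 * d * ((k : ℕ) : ℝ) = d * ((N : ℝ) * ((N - 1 : ℕ) : ℝ)) := by
      rw [← Finset.mul_sum, ← hgauss]; ring
    have hN1 : ((N - 1 : ℕ) : ℝ) ≤ (N : ℝ) := by
      have : N - 1 ≤ N := Nat.sub_le N 1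
      exact_mod_cast this
    have h7 : |(N : ℝ) * Δ i| ≤ d * ((N : ℝ) * (N : ℝ)) := by
      refine le_trans h5 ?_
      rw [h6]
      nlinarith [mul_le_mul_of_nonneg_left hN1 (mul_nonneg hd0 hNpos.le)]
    rw [abs_mul, abs_of_pos hNpos] at h7
    nlinarith
  have hb1 : ∀ i : Fin N, (x i - x (i + 1)) ^ 2 ≤ (N * d) ^ 2 := by
    intro i
    have : |x i - x (i + 1)| ≤ N * d := by
      rw [abs_sub_comm, ← hΔ1 i]; exact hΔbound _
    nlinarith [abs_nonneg (x i - x (i + 1)), sq_abs (x i - x (i + 1))]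
  have hb2 : ∀ i : Fin N, (x i - x (i + 2)) ^ 2 ≤ (2 * N * d) ^ 2 := by
    intro i
    have h8 : x (i + 2) - x i = Δ (i + 1) + Δ ((i + 1) + 1) := by
      rw [hΔ1 i, hΔ1 (i + 1)]
      open Fin.CommRing in
      have : i + 1 + 1 = i + 2 := by ring
      rw [this]; ring
    have h9 : |x i - x (i + 2)| ≤ 2 * N * d := by
      rw [abs_sub_comm, h8]
      calc |Δ (i + 1) + Δ ((i + 1) + 1)| ≤ |Δ (i + 1)| + |Δ ((i + 1) + 1)| := abs_add_le _ _
        _ ≤ N * d + N * d := add_le_add (hΔbound _) (hΔbound _)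
        _ = 2 * N * d := by ring
    nlinarith [abs_nonneg (x i - x (i + 2)), sq_abs (x i - x (i + 2))]
  have hs1 : ∑ i : Fin N, (x i - x (i + 1)) ^ 2 ≤ N * (N * d) ^ 2 := by
    calc ∑ i : Fin N, (x i - x (i + 1)) ^ 2 ≤ ∑ _i : Fin N, (N * d) ^ 2 :=
          Finset.sum_le_sum fun i _ => hb1 i
      _ = N * (N * d) ^ 2 := by
          rw [Finset.sum_const, Finset.card_univ, Fintype.card_fin, nsmul_eq_mul]
  have hs2 : ∑ i : Fin N, (x i - x (i + 2)) ^ 2 ≤ N * (2 * N * d) ^ 2 := by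
    calc ∑ i : Fin N, (x i - x (i + 2)) ^ 2 ≤ ∑ _i : Fin N, (2 * N * d) ^ 2 :=
          Finset.sum_le_sum fun i _ => hb2 i
      _ = N * (2 * N * d) ^ 2 := by
          rw [Finset.sum_const, Finset.card_univ, Fintype.card_fin, nsmul_eq_mul]
  have : 2 * ((N:ℝ) * (N * d) ^ 2) + N * (2 * N * d) ^ 2 = 6 * (N:ℝ) ^ 3 * d ^ 2 := by ring
  linarith
end

section
/- Let x ∈ ℝ^N (N ≥ 5, cyclic indexing) with d_3(x) = d(x), μ = (x_2+x_4)/2, δ = x_3 - μ > 0. Let x' be obtained by replacing x_3 with u where u < μ - 3δ. Then d_3(x') > d_3(x) and d_3(x') = max_i d_i(x'). -/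
theorem stmt_13 (N : ℕ) [NeZero N] (hN : 5 ≤ N) (x : Fin N → ℝ) (μ δ : ℝ)
    (hμ : μ = (x (3 - 1) + x (3 + 1)) / 2) (hδ : δ = x 3 - μ) (hδpos : 0 < δ)
    (hmax : |x 3 - (x (3 - 1) + x (3 + 1)) / 2| =
      Finset.univ.sup' Finset.univ_nonempty
        (fun i : Fin N => |x i - (x (i - 1) + x (i + 1)) / 2|))
    (u : ℝ) (hu : u < μ - 3 * δ)
    (x' : Fin N → ℝ) (hx' : x' = Function.update x 3 u) :
    |x' 3 - (x' (3 - 1) + x' (3 + 1)) / 2| > |x 3 - (x (3 - 1) + x (3 + 1)) / 2| ∧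
      |x' 3 - (x' (3 - 1) + x' (3 + 1)) / 2| =
        Finset.univ.sup' Finset.univ_nonempty
          (fun i : Fin N => |x' i - (x' (i - 1) + x' (i + 1)) / 2|) := by
  have v1 : ((1:Fin N):ℕ) = 1 := Fin.val_cast_of_lt (show 1 < N by omega)
  have v2 : ((2:Fin N):ℕ) = 2 := Fin.val_cast_of_lt (show 2 < N by omega)
  have v3 : ((3:Fin N):ℕ) = 3 := Fin.val_cast_of_lt (show 3 < N by omega)
  have v4 : ((4:Fin N):ℕ) = 4 := Fin.val_cast_of_lt (show 4 < N by omega)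
  have a23 : (2:Fin N) + 1 = 3 := by
    rw [Fin.ext_iff, Fin.val_add, v2, v1, v3, Nat.mod_eq_of_lt (by omega)]
  have a34 : (3:Fin N) + 1 = 4 := by
    rw [Fin.ext_iff, Fin.val_add, v3, v1, v4, Nat.mod_eq_of_lt (by omega)]
  have e32 : (3:Fin N) - 1 = 2 := by rw [sub_eq_iff_eq_add]; exact a23.symm
  have e43 : (4:Fin N) - 1 = 3 := by rw [sub_eq_iff_eq_add]; exact a34.symm
  have n23 : (2:Fin N) ≠ 3 := by
    intro h; rw [Fin.ext_iff, v2, v3] at h; omega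
  have n43 : (4:Fin N) ≠ 3 := by
    intro h; rw [Fin.ext_iff, v4, v3] at h; omega
  have n13 : (1:Fin N) ≠ 3 := by
    intro h; rw [Fin.ext_iff, v1, v3] at h; omega
  -- key value facts
  have hx'3 : x' 3 = u := by rw [hx']; exact Function.update_self _ _ _
  have hx'ne : ∀ j : Fin N, j ≠ 3 → x' j = x j := by
    intro j hj; rw [hx']; exact Function.update_of_ne hj _ _
  have hx'2 : x' (3 - 1) = x (3 - 1) := by rw [e32]; exact hx'ne 2 n23
  have hx'4 : x' (3 + 1) = x (3 + 1) := by rw [a34]; exact hx'ne 4 n43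
  have hd3 : |x 3 - (x (3 - 1) + x (3 + 1)) / 2| = δ := by
    rw [← hμ, ← hδ]; exact abs_of_pos hδpos
  have hbound : ∀ i : Fin N, |x i - (x (i - 1) + x (i + 1)) / 2| ≤ δ := by
    intro i
    have h := Finset.le_sup' (fun i : Fin N => |x i - (x (i - 1) + x (i + 1)) / 2|)
      (Finset.mem_univ i)
    rw [← hmax, hd3] at h
    exact h
  have hμu : u < μ := by linarith
  have hd3' : |x' 3 - (x' (3 - 1) + x' (3 + 1)) / 2| = μ - u := by
    rw [hx'3, hx'2, hx'4, ← hμ, abs_of_neg (by linarith : u - μ < 0)]; ring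
  have hx3v : x 3 = μ + δ := by linarith
  constructor
  · rw [hd3, hd3']; linarith
  · rw [hd3']
    apply le_antisymm
    · have h := Finset.le_sup' (fun i : Fin N => |x' i - (x' (i - 1) + x' (i + 1)) / 2|)
        (Finset.mem_univ (3 : Fin N))
      rw [hd3'] at h
      exact h
    · apply Finset.sup'_le
      intro i _
      rcases eq_or_ne i 3 with rfl | hi3
      · rw [hd3']
      rcases eq_or_ne i 2 with rfl | hi2
      · -- i = 2 : neighbors are 1 and 3
        have hb := hbound 2
        rw [a23] at hb
        have hx'm : x' (2 - 1) = x (2 - 1) := by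
          apply hx'ne
          intro h
          rw [sub_eq_iff_eq_add, a34] at h
          rw [Fin.ext_iff, v2, v4] at h
          omega
        have hx'p : x' ((2:Fin N) + 1) = u := by rw [a23]; exact hx'3
        rw [hx'ne 2 n23, hx'm, hx'p]
        rw [abs_le] at hb ⊢
        constructor <;> [nlinarith [hb.1, hb.2]; nlinarith [hb.1, hb.2]]
      rcases eq_or_ne i 4 with rfl | hi4
      · -- i = 4 : neighbors are 3 and 5
        have hb := hbound 4
        rw [e43] at hb
        have hx'p : x' ((4:Fin N) + 1) = x ((4:Fin N) + 1) := by
          apply hx'ne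
          intro h
          have : (4:Fin N) = 3 - 1 := by rw [eq_sub_iff_add_eq]; exact h
          rw [e32] at this
          rw [Fin.ext_iff, v4, v2] at this
          omega
        have hx'm : x' ((4:Fin N) - 1) = u := by rw [e43]; exact hx'3
        rw [hx'ne 4 n43, hx'm, hx'p]
        rw [abs_le] at hb ⊢
        constructor <;> [nlinarith [hb.1, hb.2]; nlinarith [hb.1, hb.2]]
      · -- generic i : unaffected
        have him : i - 1 ≠ 3 := by
          intro h
          rw [sub_eq_iff_eq_add, a34] at h
          exact hi4 h
        have hip : i + 1 ≠ 3 := by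
          intro h
          have : i = 3 - 1 := by rw [eq_sub_iff_add_eq]; exact h
          rw [e32] at this
          exact hi2 this
        rw [hx'ne i hi3, hx'ne _ him, hx'ne _ hip]
        have := hbound i
        linarith
end

section
/- Let x ∈ ℝ^N (cyclic) with d_3(x) = d(x) =: δ > 0 and x_3 > (x_2+x_4)/2 =: μ. Let x' be obtained by replacing x_3 with u. If d_3(x') ≤ d_3(x) or d_3(x') < max_i d_i(x'), then u ∈ [μ - 3δ, x_3], and in particular |u - x_3| ≤ 4δ. -/
theorem stmt_14 (N : ℕ) [NeZero N] (hN : 5 ≤ N) (x : Fin N → ℝ) (μ δ : ℝ)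
    (hμ : μ = (x (3 - 1) + x (3 + 1)) / 2) (hδ : δ = x 3 - μ) (hδpos : 0 < δ)
    (hmax : |x 3 - (x (3 - 1) + x (3 + 1)) / 2| =
      Finset.univ.sup' Finset.univ_nonempty
        (fun i : Fin N => |x i - (x (i - 1) + x (i + 1)) / 2|))
    (u : ℝ) (x' : Fin N → ℝ) (hx' : x' = Function.update x 3 u)
    (hacc : |x' 3 - (x' (3 - 1) + x' (3 + 1)) / 2| ≤ |x 3 - (x (3 - 1) + x (3 + 1)) / 2| ∨
      |x' 3 - (x' (3 - 1) + x' (3 + 1)) / 2| <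
        Finset.univ.sup' Finset.univ_nonempty
          (fun i : Fin N => |x' i - (x' (i - 1) + x' (i + 1)) / 2|)) :
    (μ - 3 * δ ≤ u ∧ u ≤ x 3) ∧ |u - x 3| ≤ 4 * δ := by
  -- numeral facts in Fin N
  have h1 : ((1 : Fin N) : ℕ) = 1 := by
    rw [Fin.coe_ofNat_eq_mod]; exact Nat.mod_eq_of_lt (by omega)
  have h2 : ((2 : Fin N) : ℕ) = 2 := by
    rw [Fin.coe_ofNat_eq_mod]; exact Nat.mod_eq_of_lt (by omega)
  have h3 : ((3 : Fin N) : ℕ) = 3 := by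
    rw [Fin.coe_ofNat_eq_mod]; exact Nat.mod_eq_of_lt (by omega)
  have h4 : ((4 : Fin N) : ℕ) = 4 := by
    rw [Fin.coe_ofNat_eq_mod]; exact Nat.mod_eq_of_lt (by omega)
  have vsub : ∀ a b : Fin N, ((a - b : Fin N) : ℕ) = (N - (b : ℕ) + (a : ℕ)) % N := by
    intro a b; rw [Fin.sub_def]
  have vadd : ∀ a b : Fin N, ((a + b : Fin N) : ℕ) = ((a : ℕ) + (b : ℕ)) % N := by
    intro a b; rw [Fin.add_def]
  have e1 : (3 - 1 : Fin N) = 2 := by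
    apply Fin.ext
    rw [vsub, h1, h3, h2]
    have h : N - 1 + 3 = N + 2 := by omega
    rw [h, Nat.add_mod_left]
    exact Nat.mod_eq_of_lt (by omega)
  have e2 : (3 + 1 : Fin N) = 4 := by
    apply Fin.ext
    rw [vadd, h1, h3, h4]
    exact Nat.mod_eq_of_lt (by omega)
  have e3 : (2 : Fin N) ≠ 3 := by rw [Ne, Fin.ext_iff, h2, h3]; omega
  have e6 : (4 : Fin N) ≠ 3 := by rw [Ne, Fin.ext_iff, h4, h3]; omega
  have e4 : (4 : Fin N) + 1 ≠ 3 := by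
    intro h
    have hv := congrArg Fin.val h
    rw [vadd, h1, h4, h3] at hv
    rcases Nat.lt_or_ge 5 N with h' | h'
    · rw [Nat.mod_eq_of_lt (by omega)] at hv; omega
    · have hN5 : N = 5 := by omega
      rw [hN5] at hv; omega
  have e5 : (2 : Fin N) - 1 ≠ 3 := by
    intro h
    have hv := congrArg Fin.val h
    rw [vsub, h1, h2, h3] at hv
    have h' : N - 1 + 2 = N + 1 := by omega
    rw [h', Nat.add_mod_left, Nat.mod_eq_of_lt (by omega)] at hv
    omega
  have isub : ∀ i : Fin N, i - 1 = 3 → i = 4 := by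
    intro i h
    have : i = 3 + 1 := by rwa [sub_eq_iff_eq_add] at h
    rw [this, e2]
  have iadd : ∀ i : Fin N, i + 1 = 3 → i = 2 := by
    intro i h
    have : i = 3 - 1 := by rw [eq_sub_iff_add_eq]; exact h
    rw [this, e1]
  subst hx'
  have hμ' : μ = (x 2 + x 4) / 2 := by rw [hμ, e1, e2]
  have habs : |x 3 - (x (3 - 1) + x (3 + 1)) / 2| = δ := by
    rw [← hμ, hδ]
    exact abs_of_pos (by linarith)
  have hsup : Finset.univ.sup' Finset.univ_nonempty
      (fun i : Fin N => |x i - (x (i - 1) + x (i + 1)) / 2|) = δ := by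
    rw [← hmax]; exact habs
  have hle : ∀ i : Fin N, |x i - (x (i - 1) + x (i + 1)) / 2| ≤ δ := by
    intro i
    have h := Finset.le_sup' (fun i : Fin N => |x i - (x (i - 1) + x (i + 1)) / 2|)
      (Finset.mem_univ i)
    exact h.trans (le_of_eq hsup)
  have hd3' : |Function.update x 3 u 3 -
      (Function.update x 3 u (3 - 1) + Function.update x 3 u (3 + 1)) / 2| = |u - μ| := by
    rw [e1, e2, Function.update_self, Function.update_of_ne e3, Function.update_of_ne e6, ← hμ']
  have t3 : |(x 3 - u) / 2| = |x 3 - u| / 2 := by rw [abs_div, abs_two]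
  have hbound : ∀ i : Fin N, |Function.update x 3 u i -
      (Function.update x 3 u (i - 1) + Function.update x 3 u (i + 1)) / 2| ≤
      max (|u - μ|) (δ + |x 3 - u| / 2) := by
    intro i
    by_cases hi : i = 3
    · subst hi
      rw [hd3']
      exact le_max_left _ _
    · rw [Function.update_of_ne hi]
      by_cases hi1 : i - 1 = 3
      · have hi4 : i = 4 := isub i hi1
        have hip : i + 1 ≠ 3 := by rw [hi4]; exact e4
        rw [hi1, Function.update_self, Function.update_of_ne hip]
        refine le_max_of_le_right ?_
        have t1 : |x i - (x 3 + x (i + 1)) / 2| ≤ δ := by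
          have := hle i; rwa [hi1] at this
        have he : x i - (u + x (i + 1)) / 2 =
            (x i - (x 3 + x (i + 1)) / 2) + (x 3 - u) / 2 := by ring
        rw [he]
        refine (abs_add_le _ _).trans ?_
        rw [t3]; linarith
      · by_cases hi2 : i + 1 = 3
        · have hi2' : i = 2 := iadd i hi2
          rw [hi2, Function.update_self, Function.update_of_ne hi1]
          refine le_max_of_le_right ?_
          have t1 : |x i - (x (i - 1) + x 3) / 2| ≤ δ := by
            have := hle i; rwa [hi2] at this
          have he : x i - (x (i - 1) + u) / 2 =
              (x i - (x (i - 1) + x 3) / 2) + (x 3 - u) / 2 := by ring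
          rw [he]
          refine (abs_add_le _ _).trans ?_
          rw [t3]; linarith
        · rw [Function.update_of_ne hi1, Function.update_of_ne hi2]
          refine le_max_of_le_right ?_
          have := hle i
          have := abs_nonneg (x 3 - u)
          linarith
  rcases hacc with hl | hr
  · rw [hd3', habs] at hl
    have h' := abs_le.mp hl
    refine ⟨⟨by linarith [h'.1], by linarith [h'.2]⟩, ?_⟩
    rcases abs_cases (u - x 3) with ⟨ha, _⟩ | ⟨ha, _⟩ <;> linarith [h'.1, h'.2]
  · rw [hd3'] at hr
    have hsle : Finset.univ.sup' Finset.univ_nonempty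
        (fun i : Fin N => |Function.update x 3 u i -
          (Function.update x 3 u (i - 1) + Function.update x 3 u (i + 1)) / 2|) ≤
        max (|u - μ|) (δ + |x 3 - u| / 2) :=
      Finset.sup'_le _ _ (fun i _ => hbound i)
    have key : |u - μ| < δ + |x 3 - u| / 2 := by
      rcases lt_or_ge (|u - μ|) (δ + |x 3 - u| / 2) with h | h
      · exact h
      · exfalso
        have hlt := hr.trans_le hsle
        rw [max_eq_left h] at hlt
        exact lt_irrefl _ hlt
    have hu_le : u ≤ x 3 := by
      rcases abs_cases (u - μ) with ⟨a1, a2⟩ | ⟨a1, a2⟩ <;>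
        rcases abs_cases (x 3 - u) with ⟨b1, b2⟩ | ⟨b1, b2⟩ <;> linarith
    have hml : μ - 3 * δ ≤ u := by
      rcases abs_cases (u - μ) with ⟨a1, a2⟩ | ⟨a1, a2⟩ <;>
        rcases abs_cases (x 3 - u) with ⟨b1, b2⟩ | ⟨b1, b2⟩ <;> linarith
    refine ⟨⟨hml, hu_le⟩, ?_⟩
    rcases abs_cases (u - x 3) with ⟨a1, _⟩ | ⟨a1, _⟩ <;> linarith
end

section
/- Let x ∈ ℝ^N (N ≥ 5, cyclic) with δ := d_3(x) = d(x), and let x' be obtained by replacing x_3 with x_3 + v where |v| ≤ 4δ. Then |h(x') - h(x)| ≤ 240δ², and consequently h(x') ≤ 121·h(x) (using 2δ² ≤ h(x)). -/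
set_option maxHeartbeats 1000000


theorem stmt_16 (N : ℕ) [NeZero N] (hN : 5 ≤ N) (x : Fin N → ℝ) (δ : ℝ)
    (hδ : δ = |x 3 - (x (3 - 1) + x (3 + 1)) / 2|)
    (hmax : δ = Finset.univ.sup' Finset.univ_nonempty
        (fun i : Fin N => |x i - (x (i - 1) + x (i + 1)) / 2|))
    (v : ℝ) (hv : |v| ≤ 4 * δ)
    (x' : Fin N → ℝ) (hx' : x' = Function.update x 3 (x 3 + v)) :
    |(2 * (∑ i : Fin N, (x' i - x' (i + 1)) ^ 2) + ∑ i : Fin N, (x' i - x' (i + 2)) ^ 2) -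
        (2 * (∑ i : Fin N, (x i - x (i + 1)) ^ 2) + ∑ i : Fin N, (x i - x (i + 2)) ^ 2)| ≤
      240 * δ ^ 2 ∧
    2 * (∑ i : Fin N, (x' i - x' (i + 1)) ^ 2) + ∑ i : Fin N, (x' i - x' (i + 2)) ^ 2 ≤
      121 * (2 * (∑ i : Fin N, (x i - x (i + 1)) ^ 2) + ∑ i : Fin N, (x i - x (i + 2)) ^ 2) := by
  -- basic Fin N facts
  have hone : (1 : Fin N) ≠ 0 := by
    open Fin.NatCast in
    have h2 : ((1:ℕ) : Fin N) = (1 : Fin N) := by norm_cast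
    intro h
    rw [← h2, Fin.natCast_eq_zero] at h
    exact absurd (Nat.le_of_dvd (by norm_num) h) (by omega)
  have htwo : (2 : Fin N) ≠ 0 := by
    open Fin.NatCast in
    have h2 : ((2:ℕ) : Fin N) = (2 : Fin N) := by norm_cast
    intro h
    rw [← h2, Fin.natCast_eq_zero] at h
    exact absurd (Nat.le_of_dvd (by norm_num) h) (by omega)
  have ne2 : (3:Fin N) - 1 ≠ 3 := by simpa [sub_eq_self] using hone
  have ne1 : (3:Fin N) - 2 ≠ 3 := by simpa [sub_eq_self] using htwo
  have ne4 : (3:Fin N) + 1 ≠ 3 := by simpa [add_eq_left] using hone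
  have ne5 : (3:Fin N) + 2 ≠ 3 := by simpa [add_eq_left] using htwo
  have e21 : (3:Fin N) - 1 + 1 = 3 := sub_add_cancel _ _
  have e12 : (3:Fin N) - 2 + 2 = 3 := sub_add_cancel _ _
  have e11 : (1:Fin N) + 1 = 2 := by
    open Fin.NatCast in
    exact_mod_cast (Nat.cast_add (R := Fin N) 1 1).symm
  have e2m : (3:Fin N) - 1 - 1 = 3 - 2 := by rw [sub_sub, e11]
  have e4m : (3:Fin N) + 1 - 1 = 3 := add_sub_cancel_right _ _
  have e4p : (3:Fin N) + 1 + 1 = 3 + 2 := by rw [add_assoc, e11]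
  -- update facts
  have upd_ne : ∀ i : Fin N, i ≠ 3 → x' i = x i := fun i hi => by
    rw [hx', Function.update_of_ne hi]
  have upd_eq : x' 3 = x 3 + v := by rw [hx', Function.update_self]
  -- the max bound
  have bound : ∀ i : Fin N, |x i - (x (i - 1) + x (i + 1)) / 2| ≤ δ := by
    intro i
    rw [hmax]
    exact Finset.le_sup' (fun i : Fin N => |x i - (x (i - 1) + x (i + 1)) / 2|)
      (Finset.mem_univ i)
  -- abbreviations
  set m := x 3 with hm
  set b := x ((3:Fin N) - 1) with hb
  set c := x ((3:Fin N) + 1) with hc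
  set p := x ((3:Fin N) - 2) with hp
  set q := x ((3:Fin N) + 2) with hq
  have bnd2 : |b - (p + m) / 2| ≤ δ := by
    have := bound ((3:Fin N) - 1)
    rwa [e2m, e21] at this
  have bnd4 : |c - (m + q) / 2| ≤ δ := by
    have := bound ((3:Fin N) + 1)
    rwa [e4m, e4p] at this
  -- sum differences
  have d1 : ∑ i : Fin N, ((x' i - x' (i + 1)) ^ 2 - (x i - x (i + 1)) ^ 2) =
      ((b - (m + v)) ^ 2 - (b - m) ^ 2) + (((m + v) - c) ^ 2 - (m - c) ^ 2) := by
    rw [← Finset.sum_subset (Finset.subset_univ ({(3:Fin N) - 1, 3} : Finset (Fin N)))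
      (fun i _ hi => by
        simp only [Finset.mem_insert, Finset.mem_singleton, not_or] at hi
        obtain ⟨hia, hib⟩ := hi
        have h1 : i + 1 ≠ 3 := fun h => hia (eq_sub_of_add_eq h)
        rw [upd_ne i hib, upd_ne (i + 1) h1]
        ring)]
    rw [Finset.sum_pair ne2, e21, upd_eq, upd_ne _ ne2, upd_ne _ ne4]
  have d2 : ∑ i : Fin N, ((x' i - x' (i + 2)) ^ 2 - (x i - x (i + 2)) ^ 2) =
      ((p - (m + v)) ^ 2 - (p - m) ^ 2) + (((m + v) - q) ^ 2 - (m - q) ^ 2) := by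
    rw [← Finset.sum_subset (Finset.subset_univ ({(3:Fin N) - 2, 3} : Finset (Fin N)))
      (fun i _ hi => by
        simp only [Finset.mem_insert, Finset.mem_singleton, not_or] at hi
        obtain ⟨hia, hib⟩ := hi
        have h1 : i + 2 ≠ 3 := fun h => hia (eq_sub_of_add_eq h)
        rw [upd_ne i hib, upd_ne (i + 2) h1]
        ring)]
    rw [Finset.sum_pair ne1, e12, upd_eq, upd_ne _ ne1, upd_ne _ ne5]
  have S1 : ∑ i : Fin N, (x' i - x' (i + 1)) ^ 2 - ∑ i : Fin N, (x i - x (i + 1)) ^ 2 =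
      ((b - (m + v)) ^ 2 - (b - m) ^ 2) + (((m + v) - c) ^ 2 - (m - c) ^ 2) := by
    rw [← Finset.sum_sub_distrib]; exact d1
  have S2 : ∑ i : Fin N, (x' i - x' (i + 2)) ^ 2 - ∑ i : Fin N, (x i - x (i + 2)) ^ 2 =
      ((p - (m + v)) ^ 2 - (p - m) ^ 2) + (((m + v) - q) ^ 2 - (m - q) ^ 2) := by
    rw [← Finset.sum_sub_distrib]; exact d2
  -- lower bound on h(x)
  have hA : (b - m) ^ 2 + (m - c) ^ 2 ≤ ∑ i : Fin N, (x i - x (i + 1)) ^ 2 := by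
    have h := Finset.sum_le_sum_of_subset_of_nonneg
      (Finset.subset_univ ({(3:Fin N) - 1, 3} : Finset (Fin N)))
      (fun i _ _ => sq_nonneg (x i - x (i + 1)))
    rw [Finset.sum_pair ne2, e21] at h
    exact h
  have hB : (0:ℝ) ≤ ∑ i : Fin N, (x i - x (i + 2)) ^ 2 :=
    Finset.sum_nonneg fun i _ => sq_nonneg _
  -- scalar facts
  have hδ0 : 0 ≤ δ := hδ ▸ abs_nonneg _
  obtain ⟨hv1, hv2⟩ := abs_le.mp hv
  have hs3a : m - (b + c) / 2 ≤ δ := hδ ▸ le_abs_self _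
  have hs3b : -δ ≤ m - (b + c) / 2 := hδ ▸ neg_abs_le _
  obtain ⟨hs2a, hs2b⟩ := abs_le.mp bnd2
  obtain ⟨hs4a, hs4b⟩ := abs_le.mp bnd4
  have hδsq : δ ^ 2 = (m - (b + c) / 2) ^ 2 := by rw [hδ, sq_abs]
  -- total difference
  have hD : (2 * (∑ i : Fin N, (x' i - x' (i + 1)) ^ 2) + ∑ i : Fin N, (x' i - x' (i + 2)) ^ 2) -
      (2 * (∑ i : Fin N, (x i - x (i + 1)) ^ 2) + ∑ i : Fin N, (x i - x (i + 2)) ^ 2) =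
      16 * v * (m - (b + c) / 2) + 4 * v * (b - (p + m) / 2) + 4 * v * (c - (m + q) / 2)
        + 6 * v ^ 2 := by
    have : (2 * (∑ i : Fin N, (x' i - x' (i + 1)) ^ 2) + ∑ i : Fin N, (x' i - x' (i + 2)) ^ 2) -
        (2 * (∑ i : Fin N, (x i - x (i + 1)) ^ 2) + ∑ i : Fin N, (x i - x (i + 2)) ^ 2) =
        2 * (∑ i : Fin N, (x' i - x' (i + 1)) ^ 2 - ∑ i : Fin N, (x i - x (i + 1)) ^ 2) +
        (∑ i : Fin N, (x' i - x' (i + 2)) ^ 2 - ∑ i : Fin N, (x i - x (i + 2)) ^ 2) := by ring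
    rw [this, S1, S2]; ring
  -- product hints
  have t1 : 0 ≤ (4 * δ + v) * (δ + (m - (b + c) / 2)) := mul_nonneg (by linarith) (by linarith)
  have t2 : 0 ≤ (4 * δ - v) * (δ - (m - (b + c) / 2)) := mul_nonneg (by linarith) (by linarith)
  have t3 : 0 ≤ (4 * δ + v) * (δ - (m - (b + c) / 2)) := mul_nonneg (by linarith) (by linarith)
  have t4 : 0 ≤ (4 * δ - v) * (δ + (m - (b + c) / 2)) := mul_nonneg (by linarith) (by linarith)
  have u1 : 0 ≤ (4 * δ + v) * (δ + (b - (p + m) / 2)) := mul_nonneg (by linarith) (by linarith)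
  have u2 : 0 ≤ (4 * δ - v) * (δ - (b - (p + m) / 2)) := mul_nonneg (by linarith) (by linarith)
  have u3 : 0 ≤ (4 * δ + v) * (δ - (b - (p + m) / 2)) := mul_nonneg (by linarith) (by linarith)
  have u4 : 0 ≤ (4 * δ - v) * (δ + (b - (p + m) / 2)) := mul_nonneg (by linarith) (by linarith)
  have w1 : 0 ≤ (4 * δ + v) * (δ + (c - (m + q) / 2)) := mul_nonneg (by linarith) (by linarith)
  have w2 : 0 ≤ (4 * δ - v) * (δ - (c - (m + q) / 2)) := mul_nonneg (by linarith) (by linarith)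
  have w3 : 0 ≤ (4 * δ + v) * (δ - (c - (m + q) / 2)) := mul_nonneg (by linarith) (by linarith)
  have w4 : 0 ≤ (4 * δ - v) * (δ + (c - (m + q) / 2)) := mul_nonneg (by linarith) (by linarith)
  have tv : 0 ≤ (4 * δ - v) * (4 * δ + v) := mul_nonneg (by linarith) (by linarith)
  have hvsq : v ^ 2 ≤ 16 * δ ^ 2 := by
    have e : (4 * δ - v) * (4 * δ + v) = 16 * δ ^ 2 - v ^ 2 := by ring
    linarith [tv]
  have c3a : v * (m - (b + c) / 2) ≤ 4 * δ ^ 2 := by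
    have e : (4 * δ + v) * (δ - (m - (b + c) / 2)) + (4 * δ - v) * (δ + (m - (b + c) / 2)) =
        8 * δ ^ 2 - 2 * (v * (m - (b + c) / 2)) := by ring
    linarith [t3, t4]
  have c3b : -(4 * δ ^ 2) ≤ v * (m - (b + c) / 2) := by
    have e : (4 * δ + v) * (δ + (m - (b + c) / 2)) + (4 * δ - v) * (δ - (m - (b + c) / 2)) =
        8 * δ ^ 2 + 2 * (v * (m - (b + c) / 2)) := by ring
    linarith [t1, t2]
  have c2a : v * (b - (p + m) / 2) ≤ 4 * δ ^ 2 := by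
    have e : (4 * δ + v) * (δ - (b - (p + m) / 2)) + (4 * δ - v) * (δ + (b - (p + m) / 2)) =
        8 * δ ^ 2 - 2 * (v * (b - (p + m) / 2)) := by ring
    linarith [u3, u4]
  have c2b : -(4 * δ ^ 2) ≤ v * (b - (p + m) / 2) := by
    have e : (4 * δ + v) * (δ + (b - (p + m) / 2)) + (4 * δ - v) * (δ - (b - (p + m) / 2)) =
        8 * δ ^ 2 + 2 * (v * (b - (p + m) / 2)) := by ring
    linarith [u1, u2]
  have c4a : v * (c - (m + q) / 2) ≤ 4 * δ ^ 2 := by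
    have e : (4 * δ + v) * (δ - (c - (m + q) / 2)) + (4 * δ - v) * (δ + (c - (m + q) / 2)) =
        8 * δ ^ 2 - 2 * (v * (c - (m + q) / 2)) := by ring
    linarith [w3, w4]
  have c4b : -(4 * δ ^ 2) ≤ v * (c - (m + q) / 2) := by
    have e : (4 * δ + v) * (δ + (c - (m + q) / 2)) + (4 * δ - v) * (δ - (c - (m + q) / 2)) =
        8 * δ ^ 2 + 2 * (v * (c - (m + q) / 2)) := by ring
    linarith [w1, w2]
  have eD : 16 * v * (m - (b + c) / 2) + 4 * v * (b - (p + m) / 2) + 4 * v * (c - (m + q) / 2)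
      + 6 * v ^ 2 = 16 * (v * (m - (b + c) / 2)) + 4 * (v * (b - (p + m) / 2))
      + 4 * (v * (c - (m + q) / 2)) + 6 * v ^ 2 := by ring
  have main : |(2 * (∑ i : Fin N, (x' i - x' (i + 1)) ^ 2) + ∑ i : Fin N, (x' i - x' (i + 2)) ^ 2) -
      (2 * (∑ i : Fin N, (x i - x (i + 1)) ^ 2) + ∑ i : Fin N, (x i - x (i + 2)) ^ 2)| ≤
      240 * δ ^ 2 := by
    rw [hD, eD, abs_le]
    constructor
    · linarith [c3b, c2b, c4b, sq_nonneg v]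
    · linarith [c3a, c2a, c4a, hvsq]
  refine ⟨main, ?_⟩
  have hDle : (2 * (∑ i : Fin N, (x' i - x' (i + 1)) ^ 2) + ∑ i : Fin N, (x' i - x' (i + 2)) ^ 2) -
      (2 * (∑ i : Fin N, (x i - x (i + 1)) ^ 2) + ∑ i : Fin N, (x i - x (i + 2)) ^ 2) ≤
      240 * δ ^ 2 := le_trans (le_abs_self _) main
  have h4 : 4 * δ ^ 2 ≤ 2 * ((b - m) ^ 2 + (m - c) ^ 2) := by
    have e : 2 * ((b - m) ^ 2 + (m - c) ^ 2) - 4 * (m - (b + c) / 2) ^ 2 =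
        ((m - b) - (m - c)) ^ 2 := by ring
    linarith [sq_nonneg ((m - b) - (m - c)), hδsq.le, hδsq.ge]
  linarith [hA, hB, hDle, h4, sq_nonneg (b - m), sq_nonneg (m - c)]
end

section
/- Let x_1,...,x_5 be reals with x_3 > (x_2+x_4)/2 and x_3 > max(Q_1,Q_2,Q_3,Q_4), where Q_0 = x_2+x_4-x_3, Q_1 = x_1-x_2+x_4, Q_2 = (-x_1+3x_2+x_4)/3, Q_3 = x_2-x_4+x_5, Q_4 = (x_2+3x_4-x_5)/3. Set a = max(0, min(Q_0,Q_1,Q_2,Q_3,Q_4)). Then x_1 + 2x_2 - 4x_3 + 2x_4 + x_5 ≤ 2a. -/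
theorem stmt_18 (x1 x2 x3 x4 x5 Q0 Q1 Q2 Q3 Q4 a : ℝ)
    (hQ0 : Q0 = x2 + x4 - x3) (hQ1 : Q1 = x1 - x2 + x4)
    (hQ2 : Q2 = (-x1 + 3 * x2 + x4) / 3) (hQ3 : Q3 = x2 - x4 + x5)
    (hQ4 : Q4 = (x2 + 3 * x4 - x5) / 3)
    (hpos : x3 > (x2 + x4) / 2)
    (hdom : x3 > max (max Q1 Q2) (max Q3 Q4))
    (ha : a = max 0 (min Q0 (min Q1 (min Q2 (min Q3 Q4))))) :
    x1 + 2 * x2 - 4 * x3 + 2 * x4 + x5 ≤ 2 * a := by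
  simp only [gt_iff_lt, max_lt_iff] at hdom
  obtain ⟨⟨hd1, hd2⟩, hd3, hd4⟩ := hdom
  subst hQ0 hQ1 hQ2 hQ3 hQ4
  have hm : (x1 + 2 * x2 - 4 * x3 + 2 * x4 + x5) / 2 ≤
      min (x2 + x4 - x3) (min (x1 - x2 + x4) (min ((-x1 + 3 * x2 + x4) / 3)
        (min (x2 - x4 + x5) ((x2 + 3 * x4 - x5) / 3)))) := by
    simp only [le_min_iff]
    exact ⟨by linarith, by linarith, by linarith, by linarith, by linarith⟩
  have h2 : min (x2 + x4 - x3) (min (x1 - x2 + x4) (min ((-x1 + 3 * x2 + x4) / 3)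
      (min (x2 - x4 + x5) ((x2 + 3 * x4 - x5) / 3)))) ≤ a := ha ▸ le_max_right _ _
  linarith
end
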